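/- Let Ω be a probability space with probability measures p and q such that p is absolutely continuous with respect to q. Then the Kullback-Leibler divergence satisfies D_KL(p‖q) = sup over measurable real-valued random variables X (for which E_p[X] and E_q[exp X] are well-defined) of (E_p[X] − ln E_q[exp X]). -/

import Mathlib

open MeasureTheory Real Filter Topology

section DVAux

variable {Ω : Type*} [MeasurableSpace Ω] {p q : Measure Ω}

lemma dv_llr_nonneg [IsProbabilityMeasure p] [IsProbabilityMeasure q]
    (hpq : p ≪ q) (h_int : Integrable (llr p q) p) :
    0 ≤ ∫ ω, llr p q ω ∂p := by
  have h1 : Integrable (fun ω => (q.rnDeriv p ω).toReal) p :=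
    Measure.integrable_toReal_rnDeriv
  have h2 : ∫ ω, (q.rnDeriv p ω).toReal ∂p ≤ 1 := by
    have := Measure.setIntegral_toReal_rnDeriv_le (μ := q) (ν := p) (s := Set.univ)
      (by simp)
    simpa using this
  have h3 : ∀ᵐ ω ∂p, -llr p q ω ≤ (q.rnDeriv p ω).toReal - 1 := by
    filter_upwards [exp_neg_llr hpq] with ω hω
    have := add_one_le_exp (-llr p q ω)
    have heq : exp (-llr p q ω) = (q.rnDeriv p ω).toReal := hω
    linarith [heq ▸ this]
  have h4 : ∫ ω, -llr p q ω ∂p ≤ ∫ ω, ((q.rnDeriv p ω).toReal - 1) ∂p :=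
    integral_mono_ae h_int.neg (h1.sub (integrable_const 1)) h3
  rw [integral_neg, integral_sub h1 (integrable_const 1)] at h4
  simp only [integral_const, measure_univ, ENNReal.toReal_one, probReal_univ, smul_eq_mul, one_mul] at h4
  linarith

lemma dv_upper [IsProbabilityMeasure p] [IsProbabilityMeasure q] (hpq : p ≪ q)
    (h_int : Integrable (llr p q) p) {X : Ω → ℝ}
    (hXp : Integrable X p) (hXq : Integrable (fun ω => exp (X ω)) q) :
    (∫ ω, X ω ∂p) - log (∫ ω, exp (X ω) ∂q) ≤ ∫ ω, llr p q ω ∂p := by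
  have hprob : IsProbabilityMeasure (q.tilted X) := isProbabilityMeasure_tilted hXq
  have hac : p ≪ q.tilted X := hpq.trans (absolutelyContinuous_tilted hXq)
  have h_int' : Integrable (llr p (q.tilted X)) p :=
    integrable_llr_tilted_right hpq hXp h_int hXq
  have h0 : 0 ≤ ∫ ω, llr p (q.tilted X) ω ∂p := dv_llr_nonneg hac h_int'
  rw [integral_llr_tilted_right hpq hXp hXq h_int] at h0
  linarith

lemma dv_negpart [IsProbabilityMeasure p] [IsProbabilityMeasure q] (hpq : p ≪ q) :
    Integrable (fun ω => max (-(llr p q ω)) 0) p := by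
  rw [← integrable_rnDeriv_smul_iff hpq]
  have hbound : ∀ᵐ ω ∂q,
      ‖(p.rnDeriv q ω).toReal • max (-(llr p q ω)) 0‖ ≤ 1 := by
    filter_upwards [] with ω
    set t := (p.rnDeriv q ω).toReal with ht
    have ht0 : 0 ≤ t := ENNReal.toReal_nonneg
    have hllr : llr p q ω = log t := rfl
    rw [smul_eq_mul, norm_eq_abs, abs_of_nonneg (by positivity), hllr]
    rcases le_or_gt 1 t with h1 | h1
    · rw [max_eq_right (by simpa using log_nonneg h1), mul_zero]
      exact zero_le_one
    · rcases eq_or_lt_of_le ht0 with h0 | h0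
      · rw [← h0]; simp
      · have hle : max (-log t) 0 ≤ 1 / t := by
          apply max_le
          · rw [← log_inv]
            have := log_le_sub_one_of_pos (x := t⁻¹) (by positivity)
            rw [one_div]
            linarith
          · positivity
        calc t * max (-log t) 0 ≤ t * (1 / t) :=
              mul_le_mul_of_nonneg_left hle ht0
        _ = 1 := by field_simp
  refine (integrable_const (1:ℝ)).mono' ?_ hbound
  exact ((Measure.measurable_rnDeriv p q).ennreal_toReal.smul
    ((measurable_llr p q).neg.max measurable_const)).aestronglyMeasurable

noncomputable def dvX (p q : Measure Ω) (n : ℕ) (ω : Ω) : ℝ :=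
  if 0 < (p.rnDeriv q ω).toReal then max (min (llr p q ω) n) (-(n : ℝ)) else -(n : ℝ)

variable {p q : Measure Ω}

lemma dvX_measurable (p q : Measure Ω) (n : ℕ) : Measurable (dvX p q n) := by
  unfold dvX
  exact Measurable.ite
    (measurableSet_lt measurable_const (Measure.measurable_rnDeriv p q).ennreal_toReal)
    (((measurable_llr p q).min measurable_const).max measurable_const) measurable_const

lemma dvX_abs_le (n : ℕ) (ω : Ω) : |dvX p q n ω| ≤ n := by
  rw [abs_le]; unfold dvX
  split_ifs with h
  · constructor
    · exact le_max_right _ _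
    · exact max_le (min_le_right _ _) (by simp [Nat.cast_nonneg])
  · constructor
    · exact le_refl _
    · have : (0:ℝ) ≤ n := Nat.cast_nonneg n
      linarith

lemma dvX_neg_le (n : ℕ) (ω : Ω) : -(n:ℝ) ≤ dvX p q n ω := (abs_le.mp (dvX_abs_le n ω)).1

lemma dvX_integrable [IsProbabilityMeasure p] (n : ℕ) : Integrable (dvX p q n) p :=
  (integrable_const (n:ℝ)).mono' (dvX_measurable p q n).aestronglyMeasurable
    (Filter.Eventually.of_forall fun ω => by
      rw [norm_eq_abs]; exact dvX_abs_le n ω)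

lemma dvX_exp_le (n : ℕ) (ω : Ω) :
    exp (dvX p q n ω) ≤ (p.rnDeriv q ω).toReal + 1 := by
  set t := (p.rnDeriv q ω).toReal with ht
  have ht0 : 0 ≤ t := ENNReal.toReal_nonneg
  unfold dvX
  split_ifs with h
  · have hb : max (min (llr p q ω) n) (-(n:ℝ)) ≤ max (llr p q ω) 0 :=
      max_le (le_trans (min_le_left _ _) (le_max_left _ _))
        (le_trans (by simp [Nat.cast_nonneg]) (le_max_right _ _))
    calc exp (max (min (llr p q ω) n) (-(n:ℝ))) ≤ exp (max (llr p q ω) 0) := exp_le_exp.mpr hb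
    _ = max (exp (llr p q ω)) (exp 0) := by
        rcases le_total (llr p q ω) 0 with h' | h'
        · rw [max_eq_right h', max_eq_right (exp_le_exp.mpr h')]
        · rw [max_eq_left h', max_eq_left (exp_le_exp.mpr h')]
    _ = max t 1 := by rw [exp_zero]; congr 1; exact exp_log h
    _ ≤ t + 1 := max_le (by linarith) (by linarith)
  · calc exp (-(n:ℝ)) ≤ exp 0 := exp_le_exp.mpr (by simp [Nat.cast_nonneg])
    _ = 1 := exp_zero
    _ ≤ t + 1 := by linarith

lemma dvX_exp_integrable [IsProbabilityMeasure p] [IsProbabilityMeasure q] (n : ℕ) :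
    Integrable (fun ω => exp (dvX p q n ω)) q :=
  (Measure.integrable_toReal_rnDeriv.add (integrable_const 1)).mono'
    ((dvX_measurable p q n).exp).aestronglyMeasurable
    (Filter.Eventually.of_forall fun ω => by
      rw [norm_eq_abs, abs_of_nonneg (exp_pos _).le]; exact dvX_exp_le n ω)

lemma dvX_Z_pos [IsProbabilityMeasure p] [IsProbabilityMeasure q] (n : ℕ) :
    0 < ∫ ω, exp (dvX p q n ω) ∂q :=
  integral_exp_pos (dvX_exp_integrable n)

lemma dvX_Z_le_two [IsProbabilityMeasure p] [IsProbabilityMeasure q] (n : ℕ) :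
    ∫ ω, exp (dvX p q n ω) ∂q ≤ 2 := by
  calc ∫ ω, exp (dvX p q n ω) ∂q
      ≤ ∫ ω, ((p.rnDeriv q ω).toReal + 1) ∂q :=
        integral_mono (dvX_exp_integrable n)
          (Measure.integrable_toReal_rnDeriv.add (integrable_const 1))
          (fun ω => dvX_exp_le n ω)
    _ = (∫ ω, (p.rnDeriv q ω).toReal ∂q) + 1 := by
        rw [integral_add Measure.integrable_toReal_rnDeriv (integrable_const 1)]
        simp
    _ ≤ 2 := by
        have := Measure.setIntegral_toReal_rnDeriv_le (μ := p) (ν := q) (s := Set.univ)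
          (by simp)
        simp only [setIntegral_univ] at this
        simp only [measure_univ, ENNReal.toReal_one, probReal_univ] at this
        linarith

lemma dvX_eq_of_le {n : ℕ} {ω : Ω} (h : 0 < (p.rnDeriv q ω).toReal)
    (hn : |llr p q ω| ≤ n) : dvX p q n ω = llr p q ω := by
  unfold dvX
  rw [if_pos h, min_eq_left (abs_le.mp hn).2, max_eq_left (abs_le.mp hn).1]

lemma dvX_le_max (n : ℕ) (ω : Ω) (h : 0 < (p.rnDeriv q ω).toReal) :
    dvX p q n ω ≤ max (llr p q ω) 0 := by
  unfold dvX
  rw [if_pos h]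
  exact max_le (le_trans (min_le_left _ _) (le_max_left _ _))
    (le_trans (by simp [Nat.cast_nonneg]) (le_max_right _ _))

lemma dvX_tendsto_pt {ω : Ω} (h : 0 < (p.rnDeriv q ω).toReal) :
    Tendsto (fun n => dvX p q n ω) atTop (𝓝 (llr p q ω)) := by
  refine tendsto_const_nhds.congr' ?_
  filter_upwards [eventually_ge_atTop ⌈|llr p q ω|⌉₊] with n hn
  exact (dvX_eq_of_le h (le_trans (Nat.le_ceil _) (by exact_mod_cast hn))).symm

lemma dv_ae_pos [SigmaFinite p] [SigmaFinite q] (hpq : p ≪ q) : ∀ᵐ ω ∂p, 0 < (p.rnDeriv q ω).toReal := by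
  filter_upwards [Measure.rnDeriv_pos hpq, hpq.ae_le (Measure.rnDeriv_lt_top p q)]
    with ω h1 h2
  exact ENNReal.toReal_pos h1.ne' h2.ne

lemma dv_tendsto_intX [IsProbabilityMeasure p] [IsProbabilityMeasure q] (hpq : p ≪ q)
    (h_int : Integrable (llr p q) p) :
    Tendsto (fun n => ∫ ω, dvX p q n ω ∂p) atTop (𝓝 (∫ ω, llr p q ω ∂p)) := by
  refine tendsto_integral_of_dominated_convergence (fun ω => |llr p q ω|)
    (fun n => (dvX_measurable p q n).aestronglyMeasurable) h_int.abs ?_ ?_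
  · intro n
    filter_upwards [dv_ae_pos hpq] with ω h
    rw [norm_eq_abs, abs_le]
    constructor
    · have : min (llr p q ω) 0 ≤ dvX p q n ω := by
        unfold dvX
        rw [if_pos h]
        exact le_trans (min_le_min (le_refl _) (Nat.cast_nonneg n)) (le_max_left _ _)
      calc -|llr p q ω| ≤ min (llr p q ω) 0 := by
            rcases le_total (llr p q ω) 0 with h' | h'
            · rw [min_eq_left h', abs_of_nonpos h']; linarith
            · rw [min_eq_right h']
              simp [abs_nonneg]
        _ ≤ dvX p q n ω := this
    · exact le_trans (dvX_le_max n ω h)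
        (max_le (le_abs_self _) (abs_nonneg _))
  · filter_upwards [dv_ae_pos hpq] with ω h using dvX_tendsto_pt h

lemma dv_tendsto_Z [IsProbabilityMeasure p] [IsProbabilityMeasure q] (hpq : p ≪ q) :
    Tendsto (fun n => ∫ ω, exp (dvX p q n ω) ∂q) atTop (𝓝 1) := by
  have h1 : ∫ ω, (p.rnDeriv q ω).toReal ∂q = 1 := by
    rw [Measure.integral_toReal_rnDeriv hpq]; simp
  rw [← h1]
  refine tendsto_integral_of_dominated_convergence
    (fun ω => (p.rnDeriv q ω).toReal + 1)
    (fun n => ((dvX_measurable p q n).exp).aestronglyMeasurable)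
    (Measure.integrable_toReal_rnDeriv.add (integrable_const 1))
    (fun n => Filter.Eventually.of_forall fun ω => by
      rw [norm_eq_abs, abs_of_nonneg (exp_pos _).le]; exact dvX_exp_le n ω) ?_
  filter_upwards [] with ω
  rcases lt_or_ge 0 (p.rnDeriv q ω).toReal with h | h
  · have := (Real.continuous_exp.tendsto _).comp (dvX_tendsto_pt (q := q) h)
    rw [Function.comp_def] at this
    have he : exp (llr p q ω) = (p.rnDeriv q ω).toReal := by
      rw [llr, exp_log h]
    rwa [he] at this
  · have ht : (p.rnDeriv q ω).toReal = 0 := le_antisymm h ENNReal.toReal_nonneg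
    have heq : ∀ n : ℕ, dvX p q n ω = -(n:ℝ) := fun n => by
      unfold dvX; rw [if_neg (by rw [ht]; exact lt_irrefl 0)]
    simp only [heq, ht]
    exact Real.tendsto_exp_atBot.comp
      ((tendsto_neg_atBot_iff.mpr tendsto_natCast_atTop_atTop))

lemma dv_pos_part_integrable [IsProbabilityMeasure p] [IsProbabilityMeasure q]
    (hpq : p ≪ q) (M : ℝ) (hM : ∀ n : ℕ, ∫ ω, dvX p q n ω ∂p ≤ M) :
    Integrable (llr p q) p := by
  have hneg := dv_negpart hpq
  set C := ∫ ω, max (-(llr p q ω)) 0 ∂p with hC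
  set g : ℕ → Ω → ℝ := fun n ω => min (max (llr p q ω) 0) (n : ℝ) with hg
  have hg_meas : ∀ n, Measurable (g n) := fun n =>
    ((measurable_llr p q).max measurable_const).min measurable_const
  have hg_nonneg : ∀ n ω, 0 ≤ g n ω := fun n ω =>
    le_min (le_max_right _ _) (Nat.cast_nonneg n)
  have hg_int : ∀ n, Integrable (g n) p := fun n =>
    (integrable_const (n : ℝ)).mono' (hg_meas n).aestronglyMeasurable
      (Filter.Eventually.of_forall fun ω => by
        rw [norm_eq_abs, abs_of_nonneg (hg_nonneg n ω)]
        exact min_le_right _ _)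
  have key : ∀ᵐ ω ∂p, ∀ n : ℕ, g n ω ≤ dvX p q n ω + max (-(llr p q ω)) 0 := by
    filter_upwards [dv_ae_pos hpq] with ω h
    intro n
    unfold dvX
    rw [if_pos h]
    simp only [hg]
    set l := llr p q ω
    rcases le_total 0 l with hl | hl
    · rw [max_eq_left hl, max_eq_right (by linarith : -l ≤ (0:ℝ))]
      have h1 : min l (n:ℝ) ≤ max (min l (n:ℝ)) (-(n:ℝ)) := le_max_left _ _
      linarith
    · have h1 : max l 0 = 0 := max_eq_right hl
      have h2 : min (0:ℝ) (n:ℝ) = 0 := min_eq_left (Nat.cast_nonneg n)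
      rw [h1, h2, min_eq_left (le_trans hl (Nat.cast_nonneg n)),
        max_eq_left (by linarith : (0:ℝ) ≤ -l)]
      have h3 : l ≤ max l (-(n:ℝ)) := le_max_left _ _
      linarith
  have hgle : ∀ n, ∫ ω, g n ω ∂p ≤ M + C := by
    intro n
    have hXi : Integrable (dvX p q n) p := by
      refine (integrable_const (n : ℝ)).mono'
        (Measurable.aestronglyMeasurable ?_) (Filter.Eventually.of_forall fun ω => ?_)
      · unfold dvX
        exact Measurable.ite
          (measurableSet_lt measurable_const (Measure.measurable_rnDeriv p q).ennreal_toReal)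
          (((measurable_llr p q).min measurable_const).max measurable_const) measurable_const
      · rw [norm_eq_abs, abs_le]
        unfold dvX
        split_ifs with hh
        · exact ⟨le_max_right _ _, max_le (min_le_right _ _)
            (le_trans (by simp) (Nat.cast_nonneg n))⟩
        · exact ⟨le_refl _, by
            have : (0:ℝ) ≤ n := Nat.cast_nonneg n
            linarith⟩
    calc ∫ ω, g n ω ∂p ≤ ∫ ω, (dvX p q n ω + max (-(llr p q ω)) 0) ∂p :=
          integral_mono_ae (hg_int n) (hXi.add hneg)
            (key.mono fun ω hω => hω n)
    _ = ∫ ω, dvX p q n ω ∂p + C := by rw [integral_add hXi hneg]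
    _ ≤ M + C := by linarith [hM n]
  -- pass to lintegral
  have hlin : ∀ n, ∫⁻ ω, ENNReal.ofReal (g n ω) ∂p = ENNReal.ofReal (∫ ω, g n ω ∂p) :=
    fun n => (ofReal_integral_eq_lintegral_ofReal (hg_int n)
      (Filter.Eventually.of_forall (hg_nonneg n))).symm
  have hmono : Monotone fun n : ℕ => fun ω => ENNReal.ofReal (g n ω) := by
    intro m n hmn ω
    exact ENNReal.ofReal_le_ofReal (min_le_min (le_refl _) (by exact_mod_cast hmn))
  have hsup : ∀ ω, (⨆ n : ℕ, ENNReal.ofReal (g n ω)) = ENNReal.ofReal (max (llr p q ω) 0) := by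
    intro ω
    apply le_antisymm
    · exact iSup_le fun n => ENNReal.ofReal_le_ofReal (min_le_left _ _)
    · refine le_iSup_of_le ⌈max (llr p q ω) 0⌉₊ ?_
      show ENNReal.ofReal (max (llr p q ω) 0) ≤
        ENNReal.ofReal (min (max (llr p q ω) 0) ((⌈max (llr p q ω) 0⌉₊ : ℕ) : ℝ))
      rw [min_eq_left (Nat.le_ceil _)]
  have hfin : ∫⁻ ω, ENNReal.ofReal (max (llr p q ω) 0) ∂p < ⊤ := by
    have := lintegral_iSup (μ := p)
      (f := fun n ω => ENNReal.ofReal (g n ω))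
      (fun n => (hg_meas n).ennreal_ofReal) hmono
    simp only [hsup] at this
    rw [this]
    refine lt_of_le_of_lt (iSup_le fun n => ?_) (show ENNReal.ofReal (M + C) < ⊤ from ENNReal.ofReal_lt_top)
    rw [hlin n]
    exact ENNReal.ofReal_le_ofReal (hgle n)
  have hpos : Integrable (fun ω => max (llr p q ω) 0) p := by
    refine ⟨((measurable_llr p q).max measurable_const).aestronglyMeasurable, ?_⟩
    exact (hasFiniteIntegral_iff_ofReal
      (Filter.Eventually.of_forall fun ω => le_max_right _ _)).mpr hfin
  have := hpos.sub hneg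
  refine this.congr (Filter.Eventually.of_forall fun ω => ?_)
  exact max_zero_sub_max_neg_zero_eq_self _

end DVAux

open MeasureTheory

/-- Donsker–Varadhan: for probability measures `p ≪ q` on a measurable space,
`D_KL(p‖q) = ∫ ln(dp/dq) dp` equals the supremum over measurable `X : Ω → ℝ` with `E_p[X]`
and `E_q[exp X]` well-defined (integrable) of `E_p[X] − ln E_q[exp X]`. -/
theorem stmt_0 {Ω : Type*} [MeasurableSpace Ω] (p q : Measure Ω)
    [IsProbabilityMeasure p] [IsProbabilityMeasure q] (hpq : p ≪ q) :
    ∫ ω, Real.log ((p.rnDeriv q ω).toReal) ∂p =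
      sSup {r : ℝ | ∃ X : Ω → ℝ, Measurable X ∧ Integrable X p ∧
        Integrable (fun ω => Real.exp (X ω)) q ∧
        r = (∫ ω, X ω ∂p) - Real.log (∫ ω, Real.exp (X ω) ∂q)} := by
  show (∫ ω, llr p q ω ∂p) =
      sSup {r : ℝ | ∃ X : Ω → ℝ, Measurable X ∧ Integrable X p ∧
        Integrable (fun ω => Real.exp (X ω)) q ∧
        r = (∫ ω, X ω ∂p) - Real.log (∫ ω, Real.exp (X ω) ∂q)}
  set S := {r : ℝ | ∃ X : Ω → ℝ, Measurable X ∧ Integrable X p ∧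
        Integrable (fun ω => Real.exp (X ω)) q ∧
        r = (∫ ω, X ω ∂p) - Real.log (∫ ω, Real.exp (X ω) ∂q)} with hS
  have h0S : (0:ℝ) ∈ S := by
    refine ⟨fun _ => (0:ℝ), measurable_const, integrable_const 0, ?_, ?_⟩
    · simp only [Real.exp_zero]
      exact (integrable_const (1:ℝ) : Integrable (fun _ : Ω => (1:ℝ)) q)
    · simp
  have hmem : ∀ n : ℕ,
      (∫ ω, dvX p q n ω ∂p - Real.log (∫ ω, Real.exp (dvX p q n ω) ∂q)) ∈ S :=
    fun n => ⟨dvX p q n, dvX_measurable p q n, dvX_integrable n, dvX_exp_integrable n, rfl⟩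
  by_cases h_int : Integrable (llr p q) p
  · have hub : ∀ s ∈ S, s ≤ ∫ ω, llr p q ω ∂p := by
      rintro s ⟨X, hXm, hXp, hXq, rfl⟩
      exact dv_upper hpq h_int hXp hXq
    refine le_antisymm ?_ (csSup_le ⟨0, h0S⟩ hub)
    have htend : Tendsto
        (fun n => ∫ ω, dvX p q n ω ∂p - Real.log (∫ ω, Real.exp (dvX p q n ω) ∂q))
        atTop (𝓝 (∫ ω, llr p q ω ∂p - Real.log 1)) :=
      (dv_tendsto_intX hpq h_int).sub
        ((Real.continuousAt_log one_ne_zero).tendsto.comp (dv_tendsto_Z hpq))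
    rw [Real.log_one, sub_zero] at htend
    exact le_of_tendsto htend
      (Filter.Eventually.of_forall fun n => le_csSup ⟨_, hub⟩ (hmem n))
  · rw [integral_undef h_int]
    symm
    apply Real.sSup_of_not_bddAbove
    rintro ⟨M, hM⟩
    refine h_int (dv_pos_part_integrable hpq (M + Real.log 2) fun n => ?_)
    have h1 : ∫ ω, dvX p q n ω ∂p
        - Real.log (∫ ω, Real.exp (dvX p q n ω) ∂q) ≤ M := hM (hmem n)
    have h2 : Real.log (∫ ω, Real.exp (dvX p q n ω) ∂q) ≤ Real.log 2 :=
      Real.log_le_log (dvX_Z_pos n) (dvX_Z_le_two n)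
    linarith
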